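/- Let ε > 0 and let ξ_ε = (w_1,…,w_N) ∈ Ξ with X_1 = {i : w_i = 0}, X_3 = {i : w_i = 1/n}, X_2 = {i : 0 < w_i < 1/n}. Assume that either (b) X_2 = ∅ and max_{i ∈ X_3} F_Φ(ξ_ε; i) ≤ min_{i ∈ X_1} F_Φ(ξ_ε; i) + ε, or (c) X_2 ≠ ∅ and there is a real number s such that s − ε/2 < F_Φ(ξ_ε; i) < s + ε/2 for every i ∈ X_2, max_{i ∈ X_3} F_Φ(ξ_ε; i) ≤ s + ε/2, and s − ε/2 ≤ min_{i ∈ X_1} F_Φ(ξ_ε; i). Then for every ξ ∈ Ξ, F_Φ(ξ_ε, ξ) ≥ −ε. -/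
import Mathlib


theorem stmt_14
    (N : ℕ) (hN : 1 ≤ N)
    (Δ : Set (Fin N → ℝ))
    (hΔ : Δ = {w : Fin N → ℝ | (∀ i, 0 ≤ w i) ∧ ∑ i, w i = 1})
    (Φ : (Fin N → ℝ) → ℝ)
    (hconv : ConvexOn ℝ Δ Φ)
    (F : (Fin N → ℝ) → (Fin N → ℝ) → ℝ)
    (hF : ∀ ξ ∈ Δ, ∀ η ∈ Δ,
      Filter.Tendsto (fun α : ℝ => (Φ ((1 - α) • ξ + α • η) - Φ ξ) / α)
        (nhdsWithin 0 (Set.Ioi 0)) (nhds (F ξ η)))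
    (hlin : ∀ ξ ∈ Δ, ∀ η ∈ Δ, F ξ η = ∑ i, η i * F ξ (Pi.single i 1))
    (n : ℕ) (hn1 : 1 ≤ n) (hnN : n ≤ N)
    (Ξ : Set (Fin N → ℝ))
    (hΞ : Ξ = {w : Fin N → ℝ | w ∈ Δ ∧ ∀ i, w i ≤ 1 / (n : ℝ)})
    (ε : ℝ) (hε : 0 < ε)
    (ξε : Fin N → ℝ) (hmem : ξε ∈ Ξ)
    (X1 X2 X3 : Set (Fin N))
    (hX1 : X1 = {i | ξε i = 0})
    (hX2 : X2 = {i | 0 < ξε i ∧ ξε i < 1 / (n : ℝ)})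
    (hX3 : X3 = {i | ξε i = 1 / (n : ℝ)})
    (hcond :
      (X2 = ∅ ∧ ∀ u ∈ X3, ∀ l ∈ X1,
        F ξε (Pi.single u 1) ≤ F ξε (Pi.single l 1) + ε) ∨
      (X2.Nonempty ∧ ∃ s : ℝ,
        (∀ i ∈ X2, s - ε / 2 < F ξε (Pi.single i 1) ∧
          F ξε (Pi.single i 1) < s + ε / 2) ∧
        (∀ u ∈ X3, F ξε (Pi.single u 1) ≤ s + ε / 2) ∧
        (∀ l ∈ X1, s - ε / 2 ≤ F ξε (Pi.single l 1)))) :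
    ∀ ξ ∈ Ξ, F ξε ξ ≥ -ε := by
  intro ξ hξ
  subst hΔ hΞ hX1 hX2 hX3
  simp only [Set.mem_setOf_eq] at hmem hξ
  obtain ⟨⟨hw0, hw1⟩, hwn⟩ := hmem
  obtain ⟨⟨hξ0, hξ1⟩, hξn⟩ := hξ
  have hξεΔ : ξε ∈ {w : Fin N → ℝ | (∀ i, 0 ≤ w i) ∧ ∑ i, w i = 1} := ⟨hw0, hw1⟩
  have hξΔ : ξ ∈ {w : Fin N → ℝ | (∀ i, 0 ≤ w i) ∧ ∑ i, w i = 1} := ⟨hξ0, hξ1⟩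
  set f : Fin N → ℝ := fun i => F ξε (Pi.single i 1) with hf
  -- F ξε ξε = 0
  have hself : F ξε ξε = 0 := by
    have h := hF ξε hξεΔ ξε hξεΔ
    have h0 : Filter.Tendsto (fun α : ℝ => (Φ ((1 - α) • ξε + α • ξε) - Φ ξε) / α)
        (nhdsWithin 0 (Set.Ioi 0)) (nhds 0) := by
      have heq : ∀ α : ℝ, (Φ ((1 - α) • ξε + α • ξε) - Φ ξε) / α = 0 := by
        intro α
        have : (1 - α) • ξε + α • ξε = ξε := by rw [← add_smul]; simp
        rw [this]; simp
      simp only [heq]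
      exact tendsto_const_nhds
    exact tendsto_nhds_unique h h0
  have hsum0 : ∑ i, ξε i * f i = 0 := by
    rw [← hlin ξε hξεΔ ξε hξεΔ]; exact hself
  rw [hlin ξε hξεΔ ξ hξΔ]
  have expand : ∀ s : ℝ, ∑ i, ξ i * f i = ∑ i, (ξ i - ξε i) * (f i - s) := by
    intro s
    have h1 : ∑ i, (ξ i - ξε i) * (f i - s)
        = ∑ i, (ξ i * f i - ξε i * f i - s * ξ i + s * ξε i) :=
      Finset.sum_congr rfl (fun i _ => by ring)
    rw [h1, Finset.sum_add_distrib, Finset.sum_sub_distrib, Finset.sum_sub_distrib,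
      ← Finset.mul_sum, ← Finset.mul_sum, hsum0, hξ1, hw1]
    ring
  rcases hcond with ⟨hX2e, hb⟩ | ⟨_, s, h2, h3, h1⟩
  · -- case (b)
    have hdich : ∀ i, ξε i = 0 ∨ ξε i = 1 / (n : ℝ) := by
      intro i
      rcases eq_or_lt_of_le (hw0 i) with h | h
      · exact Or.inl h.symm
      rcases eq_or_lt_of_le (hwn i) with h' | h'
      · exact Or.inr h'
      · exact (Set.eq_empty_iff_forall_notMem.mp hX2e i ⟨h, h'⟩).elim
    have hex : ∃ u, ξε u = 1 / (n : ℝ) := by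
      by_contra h
      push_neg at h
      have hz : ∀ i, ξε i = 0 := fun i => (hdich i).resolve_right (h i)
      rw [Finset.sum_congr rfl (fun i _ => hz i)] at hw1
      simp at hw1
    obtain ⟨u1, hu1⟩ := hex
    set X3f : Finset (Fin N) := Finset.univ.filter (fun i => ξε i = 1 / (n : ℝ)) with hX3f
    have hX3ne : X3f.Nonempty := ⟨u1, by simp [hX3f, hu1]⟩
    set s : ℝ := X3f.sup' hX3ne f with hs
    obtain ⟨u0, hu0mem, hu0eq⟩ := Finset.exists_mem_eq_sup' hX3ne f
    have hu0 : ξε u0 = 1 / (n : ℝ) := by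
      simpa [hX3f] using hu0mem
    rw [expand s]
    have key : ∀ i ∈ Finset.univ (α := Fin N), -ε * ξ i ≤ (ξ i - ξε i) * (f i - s) := by
      intro i _
      rcases hdich i with h | h
      · have hfl : f u0 ≤ f i + ε := hb u0 hu0 i h
        have hge : f i - s + ε ≥ 0 := by rw [hs, hu0eq]; linarith
        nlinarith [mul_nonneg (hξ0 i) hge]
      · have hfle : f i ≤ s := by
          rw [hs]; exact Finset.le_sup' f (by simp [hX3f, h])
        have hle : ξ i ≤ ξε i := h ▸ hξn i
        nlinarith [mul_nonneg (by linarith : (0:ℝ) ≤ ξε i - ξ i) (by linarith : (0:ℝ) ≤ s - f i),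
          mul_nonneg (hξ0 i) hε.le]
    have := Finset.sum_le_sum key
    have hL : ∑ i, -ε * ξ i = -ε := by
      rw [← Finset.mul_sum, hξ1, mul_one]
    linarith [hL ▸ this]
  · -- case (c)
    rw [expand s]
    have key : ∀ i ∈ Finset.univ (α := Fin N),
        -(ε / 2) * (ξ i + ξε i) ≤ (ξ i - ξε i) * (f i - s) := by
      intro i _
      rcases eq_or_lt_of_le (hw0 i) with h | h
      · have := h1 i h.symm
        nlinarith [mul_nonneg (hξ0 i) (by linarith : (0:ℝ) ≤ f i - s + ε / 2)]
      rcases eq_or_lt_of_le (hwn i) with h' | h'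
      · have hfu := h3 i h'
        have hle : ξ i ≤ ξε i := h' ▸ hξn i
        nlinarith [mul_nonneg (by linarith : (0:ℝ) ≤ ξε i - ξ i)
            (by linarith : (0:ℝ) ≤ s + ε / 2 - f i),
          mul_nonneg (hξ0 i) hε.le]
      · obtain ⟨hlo, hhi⟩ := h2 i ⟨h, h'⟩
        nlinarith [mul_nonneg (hξ0 i) (by linarith : (0:ℝ) ≤ f i - s + ε / 2),
          mul_nonneg (hw0 i) (by linarith : (0:ℝ) ≤ s + ε / 2 - f i)]
    have := Finset.sum_le_sum key
    have hL : ∑ i, -(ε / 2) * (ξ i + ξε i) = -ε := by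
      rw [← Finset.mul_sum, Finset.sum_add_distrib, hξ1, hw1]
      ring
    linarith [hL ▸ this]
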